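/- For every integer μ ≥ 1 and every integer N ≥ 2, W₁(Binomial(μN, 1/N), Poisson(μ)) ≤ √(2μ/π)/√N ≤ √μ/√N, where W₁ is the Wasserstein-1 distance on ℕ. -/

import Mathlib

open MeasureTheory ENNReal

noncomputable section

/-- The Wasserstein-1 distance (valued in `ℝ≥0∞`) between two measures on `ℕ`. -/
def W1nat (π₁ π₂ : Measure ℕ) : ℝ≥0∞ :=
  ⨅ (π : Measure (ℕ × ℕ)) (_ : π.map Prod.fst = π₁) (_ : π.map Prod.snd = π₂),
    ∫⁻ z, (Nat.dist z.1 z.2 : ℝ≥0∞) ∂π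

/-- The measure on `ℕ` associated with a (sub-)probability mass function `p`. -/
def seqMeas (p : ℕ → ℝ) : Measure ℕ :=
  Measure.sum (fun n : ℕ => ENNReal.ofReal (p n) • Measure.dirac n)

/-- The Poisson distribution with mean `μ` as a measure on `ℕ`. -/
def poissonMeas (μ : ℝ) : Measure ℕ :=
  seqMeas (fun n => μ ^ n * Real.exp (-μ) / n.factorial)

/-- The binomial distribution with parameters `n` and `p` as a measure on `ℕ`. -/
def binomialMeas (n : ℕ) (p : ℝ) : Measure ℕ :=
  seqMeas (fun k => if k ≤ n then (n.choose k : ℝ) * p ^ k * (1 - p) ^ (n - k) else 0)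

namespace BPW1

open Finset

/-- Binomial pmf. -/
def bp (p : ℝ) (M k : ℕ) : ℝ :=
  if k ≤ M then (M.choose k : ℝ) * p ^ k * (1 - p) ^ (M - k) else 0

/-- Poisson pmf. -/
def pp (l : ℝ) (m : ℕ) : ℝ := l ^ m * Real.exp (-l) / m.factorial

variable {p l : ℝ}

lemma bp_nonneg (hp0 : 0 ≤ p) (hp1 : p ≤ 1) (M k : ℕ) : 0 ≤ bp p M k := by
  unfold bp; split
  · have h1 : (0:ℝ) ≤ 1 - p := by linarith
    exact mul_nonneg (mul_nonneg (Nat.cast_nonneg _) (pow_nonneg hp0 _)) (pow_nonneg h1 _)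
  · exact le_refl 0

lemma sum_bp (p : ℝ) (M : ℕ) : ∑ k ∈ range (M + 1), bp p M k = 1 := by
  have h : ((p + (1 - p)) : ℝ) ^ M
      = ∑ k ∈ range (M + 1), p ^ k * (1 - p) ^ (M - k) * (M.choose k : ℝ) := add_pow _ _ _
  have h1 : ((p + (1 - p)) : ℝ) = 1 := by ring
  rw [h1, one_pow] at h
  rw [h]
  refine Finset.sum_congr rfl fun k hk => ?_
  rw [Finset.mem_range, Nat.lt_succ_iff] at hk
  rw [bp, if_pos hk]; ring

lemma bp_le_one (hp0 : 0 ≤ p) (hp1 : p ≤ 1) (M k : ℕ) : bp p M k ≤ 1 := by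
  by_cases hk : k ≤ M
  · calc bp p M k ≤ ∑ i ∈ range (M + 1), bp p M i :=
        Finset.single_le_sum (fun i _ => bp_nonneg hp0 hp1 M i)
          (Finset.mem_range.2 (Nat.lt_succ_of_le hk))
    _ = 1 := sum_bp p M
  · rw [bp, if_neg hk]; norm_num

lemma mean_bp (p : ℝ) (M : ℕ) : ∑ k ∈ range (M + 1), (k : ℝ) * bp p M k = M * p := by
  cases M with
  | zero => simp
  | succ s =>
    rw [Finset.sum_range_succ']
    have key : ∀ k ∈ range (s + 1),
        ((k + 1 : ℕ) : ℝ) * bp p (s + 1) (k + 1) = ((s + 1 : ℕ) : ℝ) * p * bp p s k := by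
      intro k hk
      rw [Finset.mem_range, Nat.lt_succ_iff] at hk
      rw [bp, bp, if_pos (Nat.succ_le_succ hk), if_pos hk]
      have hc' : (s + 1) * s.choose k = (s + 1).choose (k + 1) * (k + 1) :=
        Nat.add_one_mul_choose_eq s k
      have hc : ((s + 1 : ℕ) : ℝ) * (s.choose k : ℝ)
          = ((s + 1).choose (k + 1) : ℝ) * ((k + 1 : ℕ) : ℝ) := by exact_mod_cast hc'
      have hsub : (s + 1) - (k + 1) = s - k := by omega
      rw [hsub, pow_succ]
      push_cast at hc ⊢
      linear_combination (-(p ^ k * p * (1 - p) ^ (s - k))) * hc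
    rw [Finset.sum_congr rfl key, ← Finset.mul_sum, sum_bp]
    simp

lemma conv_bp (p : ℝ) (a b k : ℕ) :
    ∑ j ∈ range (k + 1), bp p a j * bp p b (k - j) = bp p (a + b) k := by
  by_cases hk : k ≤ a + b
  · have key : ∀ j ∈ range (k + 1), bp p a j * bp p b (k - j)
        = ((a.choose j * b.choose (k - j) : ℕ) : ℝ) * (p ^ k * (1 - p) ^ (a + b - k)) := by
      intro j hj
      rw [Finset.mem_range, Nat.lt_succ_iff] at hj
      by_cases hja : j ≤ a
      · by_cases hjb : k - j ≤ b
        · rw [bp, bp, if_pos hja, if_pos hjb]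
          have e1 : p ^ j * p ^ (k - j) = p ^ k := by
            rw [← pow_add]; congr 1; omega
          have e2 : (1 - p) ^ (a - j) * (1 - p) ^ (b - (k - j)) = (1 - p) ^ (a + b - k) := by
            rw [← pow_add]; congr 1; omega
          push_cast
          calc (a.choose j : ℝ) * p ^ j * (1 - p) ^ (a - j)
                * ((b.choose (k - j) : ℝ) * p ^ (k - j) * (1 - p) ^ (b - (k - j)))
              = ((a.choose j : ℝ) * (b.choose (k - j) : ℝ))
                * ((p ^ j * p ^ (k - j)) * ((1 - p) ^ (a - j) * (1 - p) ^ (b - (k - j)))) := by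
                ring
            _ = (a.choose j : ℝ) * (b.choose (k - j) : ℝ) * (p ^ k * (1 - p) ^ (a + b - k)) := by
                rw [e1, e2]
        · have hb0 : b.choose (k - j) = 0 := Nat.choose_eq_zero_of_lt (by omega)
          rw [bp, bp, if_neg hjb, hb0]
          simp
      · have ha0 : a.choose j = 0 := Nat.choose_eq_zero_of_lt (by omega)
        rw [bp, if_neg hja, ha0]
        simp
    rw [Finset.sum_congr rfl key, ← Finset.sum_mul, ← Nat.cast_sum]
    have hV : ∑ j ∈ range (k + 1), a.choose j * b.choose (k - j) = (a + b).choose k := by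
      rw [Nat.add_choose_eq, Finset.Nat.sum_antidiagonal_eq_sum_range_succ_mk]
    rw [hV, bp, if_pos hk]; ring
  · rw [bp, if_neg hk]
    refine Finset.sum_eq_zero fun j hj => ?_
    rw [Finset.mem_range, Nat.lt_succ_iff] at hj
    by_cases hja : j ≤ a
    · have hb : ¬ (k - j ≤ b) := by omega
      simp only [bp]
      rw [if_neg hb, mul_zero]
    · simp only [bp]
      rw [if_neg hja, zero_mul]

lemma tsum_ofReal_bp (hp0 : 0 ≤ p) (hp1 : p ≤ 1) (M : ℕ) :
    ∑' k : ℕ, ENNReal.ofReal (bp p M k) = 1 := by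
  rw [tsum_eq_sum (s := range (M + 1)) (fun b hb => by
    have h : ¬ b ≤ M := by simpa [Finset.mem_range, Nat.lt_succ_iff] using hb
    simp [bp, h])]
  rw [← ENNReal.ofReal_sum_of_nonneg (fun i _ => bp_nonneg hp0 hp1 M i), sum_bp,
    ENNReal.ofReal_one]

lemma tsum_ofReal_bp_mul (hp0 : 0 ≤ p) (hp1 : p ≤ 1) (M : ℕ) :
    ∑' k : ℕ, ENNReal.ofReal ((k : ℝ) * bp p M k) = ENNReal.ofReal (M * p) := by
  rw [tsum_eq_sum (s := range (M + 1)) (fun b hb => by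
    have h : ¬ b ≤ M := by simpa [Finset.mem_range, Nat.lt_succ_iff] using hb
    simp [bp, h])]
  rw [← ENNReal.ofReal_sum_of_nonneg
    (fun i _ => mul_nonneg (Nat.cast_nonneg _) (bp_nonneg hp0 hp1 M i)), mean_bp]

lemma pp_nonneg (hl : 0 ≤ l) (m : ℕ) : 0 ≤ pp l m := by
  unfold pp; positivity

lemma summable_pp (l : ℝ) : Summable (pp l) := by
  have h := (Real.summable_pow_div_factorial l).mul_right (Real.exp (-l))
  exact h.congr fun m => by rw [pp]; ring

lemma tsum_exp (x : ℝ) : ∑' n : ℕ, x ^ n / n.factorial = Real.exp x := by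
  rw [Real.exp_eq_exp_ℝ, NormedSpace.exp_eq_tsum_div]

lemma tsum_pp (l : ℝ) : ∑' m : ℕ, pp l m = 1 := by
  calc ∑' m : ℕ, pp l m = ∑' m : ℕ, Real.exp (-l) * (l ^ m / m.factorial) :=
      tsum_congr fun m => by rw [pp]; ring
    _ = Real.exp (-l) * ∑' m : ℕ, l ^ m / m.factorial := tsum_mul_left
    _ = 1 := by rw [tsum_exp, ← Real.exp_add]; simp

lemma tsum_ofReal_pp (hl : 0 ≤ l) : ∑' m : ℕ, ENNReal.ofReal (pp l m) = 1 := by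
  rw [← ENNReal.ofReal_tsum_of_nonneg (pp_nonneg hl) (summable_pp l), tsum_pp,
    ENNReal.ofReal_one]

lemma pp_mul (l : ℝ) (m : ℕ) : ((m : ℝ) + 1) * pp l (m + 1) = l * pp l m := by
  rw [pp, pp, pow_succ, Nat.factorial_succ]
  have h2 : (m.factorial : ℝ) ≠ 0 := by exact_mod_cast m.factorial_ne_zero
  have h1 : ((m : ℝ) + 1) ≠ 0 := by positivity
  push_cast
  field_simp

lemma summable_mul_pp (l : ℝ) : Summable (fun m : ℕ => (m : ℝ) * pp l m) := by
  refine (summable_nat_add_iff 1).1 ?_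
  refine ((summable_pp l).mul_left l).congr fun n => ?_
  have h := pp_mul l n
  push_cast
  linarith [h]

lemma summable_dist_pp (n : ℕ) :
    Summable (fun m : ℕ => (Nat.dist m n : ℝ) * pp (n : ℝ) m) := by
  have hl : (0:ℝ) ≤ (n : ℝ) := Nat.cast_nonneg n
  refine Summable.of_nonneg_of_le
    (fun m => mul_nonneg (Nat.cast_nonneg _) (pp_nonneg hl m))
    (fun m => ?_)
    ((summable_mul_pp (n : ℝ)).add ((summable_pp (n : ℝ)).mul_left (n : ℝ)))
  have hd : (Nat.dist m n : ℝ) ≤ (m : ℝ) + (n : ℝ) := by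
    have : Nat.dist m n ≤ m + n := by
      simp only [Nat.dist]; omega
    exact_mod_cast this
  calc (Nat.dist m n : ℝ) * pp (n : ℝ) m ≤ ((m : ℝ) + (n : ℝ)) * pp (n : ℝ) m :=
      mul_le_mul_of_nonneg_right hd (pp_nonneg hl m)
    _ = (m : ℝ) * pp (n : ℝ) m + (n : ℝ) * pp (n : ℝ) m := by ring

lemma sum_sub_pp (l : ℝ) (c : ℕ) :
    ∑ m ∈ range (c + 1), (l - (m : ℝ)) * pp l m = l * pp l c := by
  induction c with
  | zero => simp
  | succ c ih =>
    rw [Finset.sum_range_succ, ih]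
    have h := pp_mul l c
    push_cast
    linarith [h]

lemma mad_upper (n : ℕ) :
    ∑' t : ℕ, ((t : ℝ) + 1) * pp (n : ℝ) (t + (n + 1)) = (n : ℝ) * pp (n : ℝ) n := by
  have hs1 : Summable (fun t : ℕ => pp (n : ℝ) (t + n)) :=
    (summable_nat_add_iff n).2 (summable_pp _)
  have hs2 : Summable (fun t : ℕ => pp (n : ℝ) (t + (n + 1))) :=
    (summable_nat_add_iff (n + 1)).2 (summable_pp _)
  have key : ∀ t : ℕ, ((t : ℝ) + 1) * pp (n : ℝ) (t + (n + 1))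
      = (n : ℝ) * pp (n : ℝ) (t + n) - (n : ℝ) * pp (n : ℝ) (t + (n + 1)) := by
    intro t
    have h := pp_mul (n : ℝ) (t + n)
    push_cast at h
    have he : t + (n + 1) = t + n + 1 := by omega
    rw [he]
    linarith [h]
  rw [tsum_congr key, Summable.tsum_sub (hs1.mul_left _) (hs2.mul_left _)]
  rw [tsum_mul_left, tsum_mul_left]
  have hshift : ∑' t : ℕ, pp (n : ℝ) (t + n)
      = pp (n : ℝ) n + ∑' t : ℕ, pp (n : ℝ) (t + (n + 1)) := by
    rw [Summable.tsum_eq_zero_add hs1]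
    congr 1
    · simp
    · exact tsum_congr fun t => by congr 1; omega
  rw [hshift]
  ring

lemma mad (n : ℕ) :
    ∑' m : ℕ, (Nat.dist m n : ℝ) * pp (n : ℝ) m = 2 * (n : ℝ) * pp (n : ℝ) n := by
  have hsum := summable_dist_pp n
  rw [← hsum.sum_add_tsum_nat_add (n + 1)]
  have h1 : ∑ m ∈ range (n + 1), (Nat.dist m n : ℝ) * pp (n : ℝ) m
      = (n : ℝ) * pp (n : ℝ) n := by
    rw [← sum_sub_pp (n : ℝ) n]
    refine Finset.sum_congr rfl fun m hm => ?_
    rw [Finset.mem_range, Nat.lt_succ_iff] at hm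
    have hd : Nat.dist m n = n - m := Nat.dist_eq_sub_of_le hm
    rw [hd, Nat.cast_sub hm]
  have h2 : ∑' t : ℕ, (Nat.dist (t + (n + 1)) n : ℝ) * pp (n : ℝ) (t + (n + 1))
      = (n : ℝ) * pp (n : ℝ) n := by
    rw [← mad_upper n]
    refine tsum_congr fun t => ?_
    have hd : Nat.dist (t + (n + 1)) n = t + 1 := by
      rw [Nat.dist_eq_sub_of_le_right (by omega)]
      omega
    rw [hd]
    push_cast
    ring_nf
  rw [h1, h2]
  ring

lemma summable_pp_bp (hl : 0 ≤ l) (hp0 : 0 ≤ p) (hp1 : p ≤ 1) (j : ℕ) :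
    Summable (fun m : ℕ => pp l m * bp p m j) := by
  refine Summable.of_nonneg_of_le
    (fun m => mul_nonneg (pp_nonneg hl m) (bp_nonneg hp0 hp1 _ _))
    (fun m => mul_le_of_le_one_right (pp_nonneg hl m) (bp_le_one hp0 hp1 m j))
    (summable_pp l)

lemma thin (hl : 0 ≤ l) (hp0 : 0 ≤ p) (hp1 : p ≤ 1) (j : ℕ) :
    ∑' m : ℕ, pp l m * bp p m j = pp (l * p) j := by
  have hsum := summable_pp_bp hl hp0 hp1 j
  rw [← hsum.sum_add_tsum_nat_add j]
  have h0 : ∑ m ∈ range j, pp l m * bp p m j = 0 := by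
    refine Finset.sum_eq_zero fun m hm => ?_
    have : ¬ j ≤ m := by simpa [Finset.mem_range] using Finset.mem_range.1 hm
    rw [bp, if_neg this, mul_zero]
  rw [h0, zero_add]
  have key : ∀ t : ℕ, pp l (t + j) * bp p (t + j) j
      = ((l * p) ^ j * Real.exp (-l) / j.factorial) * ((l * (1 - p)) ^ t / t.factorial) := by
    intro t
    rw [pp, bp, if_pos (Nat.le_add_left j t)]
    have hst : t + j - j = t := by omega
    rw [hst]
    have hC' : (t + j).choose j * j.factorial * t.factorial = (t + j).factorial := by
      have h := Nat.choose_mul_factorial_mul_factorial (Nat.le_add_left j t)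
      rwa [show t + j - j = t from by omega] at h
    have hC : ((t + j).choose j : ℝ) * (j.factorial : ℝ) * (t.factorial : ℝ)
        = ((t + j).factorial : ℝ) := by exact_mod_cast congrArg Nat.cast hC'
    have hf1 : ((t + j).factorial : ℝ) ≠ 0 := by exact_mod_cast (t + j).factorial_ne_zero
    have hf2 : (j.factorial : ℝ) ≠ 0 := by exact_mod_cast j.factorial_ne_zero
    have hf3 : (t.factorial : ℝ) ≠ 0 := by exact_mod_cast t.factorial_ne_zero
    field_simp
    rw [pow_add, mul_pow, mul_pow]
    linear_combination (l ^ t * l ^ j * p ^ j * (1 - p) ^ t) * hC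
  calc ∑' t : ℕ, pp l (t + j) * bp p (t + j) j
      = ∑' t : ℕ, ((l * p) ^ j * Real.exp (-l) / j.factorial)
          * ((l * (1 - p)) ^ t / t.factorial) := tsum_congr key
    _ = ((l * p) ^ j * Real.exp (-l) / j.factorial) * Real.exp (l * (1 - p)) := by
        rw [tsum_mul_left, tsum_exp]
    _ = pp (l * p) j := by
        rw [pp]
        have he : Real.exp (-l) * Real.exp (l * (1 - p)) = Real.exp (-(l * p)) := by
          rw [← Real.exp_add]; congr 1; ring
        rw [← he]
        ring

end BPW1

end

noncomputable section

open MeasureTheory ENNReal BPW1 Finset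

namespace BPW1

variable {p : ℝ}

/-- Shifting a tsum in `ℝ≥0∞` when the first `k` terms vanish. -/
lemma tsum_shift (g : ℕ → ℝ≥0∞) (k : ℕ) (h0 : ∀ j, j < k → g j = 0) :
    ∑' j : ℕ, g j = ∑' z : ℕ, g (z + k) := by
  refine (Function.Injective.tsum_eq (g := fun z : ℕ => z + k)
    (add_left_injective k) ?_).symm
  intro x hx
  rcases lt_or_ge x k with h | h
  · exact absurd (h0 x h) hx
  · exact ⟨x - k, Nat.sub_add_cancel h⟩

/-- joint sub-kernel given total-count value m -/
def Rk (p : ℝ) (n m k j : ℕ) : ℝ :=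
  if n ≤ m then (if k ≤ j then bp p n k * bp p (m - n) (j - k) else 0)
  else (if j ≤ k then bp p m j * bp p (n - m) (k - j) else 0)

/-- joint pmf of the coupling -/
def Qk (p : ℝ) (n : ℕ) (x : ℕ × ℕ) : ℝ≥0∞ :=
  ∑' m : ℕ, ENNReal.ofReal (pp (n : ℝ) m * Rk p n m x.1 x.2)

/-- the coupling measure -/
def cplMeas (p : ℝ) (n : ℕ) : Measure (ℕ × ℕ) :=
  Measure.sum (fun x : ℕ × ℕ => Qk p n x • Measure.dirac x)

lemma tsum_Rk_j (hp0 : 0 ≤ p) (hp1 : p ≤ 1) (n m k : ℕ) :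
    ∑' j : ℕ, ENNReal.ofReal (Rk p n m k j) = ENNReal.ofReal (bp p n k) := by
  by_cases hm : n ≤ m
  · simp only [Rk, if_pos hm]
    rw [tsum_shift _ k (fun j hj => by
      have : ¬ k ≤ j := by omega
      simp [this])]
    have key : ∀ z : ℕ,
        ENNReal.ofReal (if k ≤ z + k then bp p n k * bp p (m - n) (z + k - k) else 0)
        = ENNReal.ofReal (bp p n k) * ENNReal.ofReal (bp p (m - n) z) := by
      intro z
      rw [if_pos (Nat.le_add_left k z), show z + k - k = z from by omega,
        ENNReal.ofReal_mul (bp_nonneg hp0 hp1 _ _)]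
    rw [tsum_congr key, ENNReal.tsum_mul_left, tsum_ofReal_bp hp0 hp1, mul_one]
  · simp only [Rk, if_neg hm]
    rw [tsum_eq_sum (s := Finset.range (k + 1)) (fun j hj => by
      have : ¬ j ≤ k := by simpa [Finset.mem_range, Nat.lt_succ_iff] using hj
      simp [this])]
    rw [← ENNReal.ofReal_sum_of_nonneg (fun j _ => by
      split
      · exact mul_nonneg (bp_nonneg hp0 hp1 _ _) (bp_nonneg hp0 hp1 _ _)
      · exact le_refl 0)]
    congr 1
    calc ∑ j ∈ range (k + 1), (if j ≤ k then bp p m j * bp p (n - m) (k - j) else 0)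
        = ∑ j ∈ range (k + 1), bp p m j * bp p (n - m) (k - j) := by
          refine Finset.sum_congr rfl fun j hj => ?_
          rw [Finset.mem_range, Nat.lt_succ_iff] at hj
          rw [if_pos hj]
      _ = bp p (m + (n - m)) k := conv_bp p m (n - m) k
      _ = bp p n k := by rw [show m + (n - m) = n from by omega]

lemma tsum_Rk_k (hp0 : 0 ≤ p) (hp1 : p ≤ 1) (n m j : ℕ) :
    ∑' k : ℕ, ENNReal.ofReal (Rk p n m k j) = ENNReal.ofReal (bp p m j) := by
  by_cases hm : n ≤ m
  · simp only [Rk, if_pos hm]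
    rw [tsum_eq_sum (s := Finset.range (j + 1)) (fun k hk => by
      have : ¬ k ≤ j := by simpa [Finset.mem_range, Nat.lt_succ_iff] using hk
      simp [this])]
    rw [← ENNReal.ofReal_sum_of_nonneg (fun k _ => by
      split
      · exact mul_nonneg (bp_nonneg hp0 hp1 _ _) (bp_nonneg hp0 hp1 _ _)
      · exact le_refl 0)]
    congr 1
    calc ∑ k ∈ range (j + 1), (if k ≤ j then bp p n k * bp p (m - n) (j - k) else 0)
        = ∑ k ∈ range (j + 1), bp p n k * bp p (m - n) (j - k) := by
          refine Finset.sum_congr rfl fun k hk => ?_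
          rw [Finset.mem_range, Nat.lt_succ_iff] at hk
          rw [if_pos hk]
      _ = bp p (n + (m - n)) j := conv_bp p n (m - n) j
      _ = bp p m j := by rw [show n + (m - n) = m from by omega]
  · simp only [Rk, if_neg hm]
    rw [tsum_shift _ j (fun k hk => by
      have : ¬ j ≤ k := by omega
      simp [this])]
    have key : ∀ z : ℕ,
        ENNReal.ofReal (if j ≤ z + j then bp p m j * bp p (n - m) (z + j - j) else 0)
        = ENNReal.ofReal (bp p m j) * ENNReal.ofReal (bp p (n - m) z) := by
      intro z
      rw [if_pos (Nat.le_add_left j z), show z + j - j = z from by omega,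
        ENNReal.ofReal_mul (bp_nonneg hp0 hp1 _ _)]
    rw [tsum_congr key, ENNReal.tsum_mul_left, tsum_ofReal_bp hp0 hp1, mul_one]

lemma tsum_Rk_cost (hp0 : 0 ≤ p) (hp1 : p ≤ 1) (n m : ℕ) :
    ∑' k : ℕ, ∑' j : ℕ, ENNReal.ofReal (Rk p n m k j) * ((Nat.dist k j : ℕ) : ℝ≥0∞)
      = ENNReal.ofReal ((Nat.dist m n : ℝ) * p) := by
  by_cases hm : n ≤ m
  · simp only [Rk, if_pos hm]
    have inner : ∀ k : ℕ,
        ∑' j : ℕ, ENNReal.ofReal (if k ≤ j then bp p n k * bp p (m - n) (j - k) else 0)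
            * ((Nat.dist k j : ℕ) : ℝ≥0∞)
        = ENNReal.ofReal (bp p n k) * ENNReal.ofReal (((m - n : ℕ) : ℝ) * p) := by
      intro k
      rw [tsum_shift _ k (fun j hj => by
        have : ¬ k ≤ j := by omega
        simp [this])]
      have key : ∀ z : ℕ,
          ENNReal.ofReal (if k ≤ z + k then bp p n k * bp p (m - n) (z + k - k) else 0)
            * ((Nat.dist k (z + k) : ℕ) : ℝ≥0∞)
          = ENNReal.ofReal (bp p n k) * ENNReal.ofReal ((z : ℝ) * bp p (m - n) z) := by
        intro z
        rw [if_pos (Nat.le_add_left k z), show z + k - k = z from by omega]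
        have hd : Nat.dist k (z + k) = z := by
          rw [Nat.dist_eq_sub_of_le (Nat.le_add_left k z)]
          omega
        rw [hd, ← ENNReal.ofReal_natCast z,
          ← ENNReal.ofReal_mul (mul_nonneg (bp_nonneg hp0 hp1 _ _) (bp_nonneg hp0 hp1 _ _)),
          ← ENNReal.ofReal_mul (bp_nonneg hp0 hp1 _ _)]
        congr 1
        ring
      rw [tsum_congr key, ENNReal.tsum_mul_left, tsum_ofReal_bp_mul hp0 hp1]
    rw [tsum_congr inner, ENNReal.tsum_mul_right, tsum_ofReal_bp hp0 hp1, one_mul]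
    congr 1
    rw [Nat.dist_eq_sub_of_le_right hm]
  · push_neg at hm
    simp only [Rk, if_neg (not_le.2 hm)]
    rw [ENNReal.tsum_comm]
    have inner : ∀ j : ℕ,
        ∑' k : ℕ, ENNReal.ofReal (if j ≤ k then bp p m j * bp p (n - m) (k - j) else 0)
            * ((Nat.dist k j : ℕ) : ℝ≥0∞)
        = ENNReal.ofReal (bp p m j) * ENNReal.ofReal (((n - m : ℕ) : ℝ) * p) := by
      intro j
      rw [tsum_shift _ j (fun k hk => by
        have : ¬ j ≤ k := by omega
        simp [this])]
      have key : ∀ z : ℕ,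
          ENNReal.ofReal (if j ≤ z + j then bp p m j * bp p (n - m) (z + j - j) else 0)
            * ((Nat.dist (z + j) j : ℕ) : ℝ≥0∞)
          = ENNReal.ofReal (bp p m j) * ENNReal.ofReal ((z : ℝ) * bp p (n - m) z) := by
        intro z
        rw [if_pos (Nat.le_add_left j z), show z + j - j = z from by omega]
        have hd : Nat.dist (z + j) j = z := by
          rw [Nat.dist_eq_sub_of_le_right (Nat.le_add_left j z)]
          omega
        rw [hd, ← ENNReal.ofReal_natCast z,
          ← ENNReal.ofReal_mul (mul_nonneg (bp_nonneg hp0 hp1 _ _) (bp_nonneg hp0 hp1 _ _)),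
          ← ENNReal.ofReal_mul (bp_nonneg hp0 hp1 _ _)]
        congr 1
        ring
      rw [tsum_congr key, ENNReal.tsum_mul_left, tsum_ofReal_bp_mul hp0 hp1]
    rw [tsum_congr inner, ENNReal.tsum_mul_right, tsum_ofReal_bp hp0 hp1, one_mul]
    congr 1
    rw [Nat.dist_eq_sub_of_le (le_of_lt hm)]

lemma seqMeas_singleton (f : ℕ → ℝ) (a : ℕ) : seqMeas f {a} = ENNReal.ofReal (f a) := by
  rw [seqMeas, Measure.sum_apply _ (measurableSet_singleton a)]
  rw [tsum_eq_single a (fun b hb => by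
    simp [Measure.smul_apply, Measure.dirac_apply, Set.indicator_of_notMem, hb])]
  simp

lemma cpl_fst_apply (n : ℕ) (k : ℕ) :
    (cplMeas p n).map Prod.fst {k} = ∑' j : ℕ, Qk p n (k, j) := by
  rw [Measure.map_apply measurable_fst (measurableSet_singleton k)]
  rw [cplMeas, Measure.sum_apply _ (measurable_fst (measurableSet_singleton k))]
  rw [ENNReal.tsum_prod']
  rw [tsum_eq_single k (fun a ha => by
    refine ENNReal.summable.tsum_eq_zero_iff.2 fun b => ?_
    have h : (a, b) ∉ Prod.fst ⁻¹' ({k} : Set ℕ) := by simp [ha]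
    simp [Measure.smul_apply, Measure.dirac_apply, Set.indicator_of_notMem, h])]
  refine tsum_congr fun b => ?_
  have h : (k, b) ∈ Prod.fst ⁻¹' ({k} : Set ℕ) := by simp
  simp [Measure.smul_apply, Measure.dirac_apply, Set.indicator_of_mem, h]

lemma cpl_snd_apply (n : ℕ) (j : ℕ) :
    (cplMeas p n).map Prod.snd {j} = ∑' k : ℕ, Qk p n (k, j) := by
  rw [Measure.map_apply measurable_snd (measurableSet_singleton j)]
  rw [cplMeas, Measure.sum_apply _ (measurable_snd (measurableSet_singleton j))]
  rw [ENNReal.tsum_prod']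
  refine tsum_congr fun a => ?_
  rw [tsum_eq_single j (fun b hb => by
    have h : (a, b) ∉ Prod.snd ⁻¹' ({j} : Set ℕ) := by simp [hb]
    simp [Measure.smul_apply, Measure.dirac_apply, Set.indicator_of_notMem, h])]
  have h : (a, j) ∈ Prod.snd ⁻¹' ({j} : Set ℕ) := by simp
  simp [Measure.smul_apply, Measure.dirac_apply, Set.indicator_of_mem, h]

lemma cpl_fst (hp0 : 0 ≤ p) (hp1 : p ≤ 1) (n : ℕ) :
    (cplMeas p n).map Prod.fst = seqMeas (bp p n) := by
  refine MeasureTheory.Measure.ext_of_singleton fun k => ?_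
  rw [cpl_fst_apply, seqMeas_singleton]
  simp only [Qk]
  rw [ENNReal.tsum_comm]
  have hin : ∀ m : ℕ, ∑' j : ℕ, ENNReal.ofReal (pp (n : ℝ) m * Rk p n m k j)
      = ENNReal.ofReal (pp (n : ℝ) m) * ENNReal.ofReal (bp p n k) := by
    intro m
    calc ∑' j : ℕ, ENNReal.ofReal (pp (n : ℝ) m * Rk p n m k j)
        = ∑' j : ℕ, ENNReal.ofReal (pp (n : ℝ) m) * ENNReal.ofReal (Rk p n m k j) :=
          tsum_congr fun j => ENNReal.ofReal_mul (pp_nonneg (Nat.cast_nonneg n) m)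
      _ = ENNReal.ofReal (pp (n : ℝ) m) * ∑' j : ℕ, ENNReal.ofReal (Rk p n m k j) :=
          ENNReal.tsum_mul_left
      _ = ENNReal.ofReal (pp (n : ℝ) m) * ENNReal.ofReal (bp p n k) := by
          rw [tsum_Rk_j hp0 hp1]
  rw [tsum_congr hin, ENNReal.tsum_mul_right, tsum_ofReal_pp (Nat.cast_nonneg n), one_mul]

lemma cpl_snd (hp0 : 0 ≤ p) (hp1 : p ≤ 1) (n : ℕ) :
    (cplMeas p n).map Prod.snd = seqMeas (pp ((n : ℝ) * p)) := by
  refine MeasureTheory.Measure.ext_of_singleton fun j => ?_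
  rw [cpl_snd_apply, seqMeas_singleton]
  simp only [Qk]
  rw [ENNReal.tsum_comm]
  have hin : ∀ m : ℕ, ∑' k : ℕ, ENNReal.ofReal (pp (n : ℝ) m * Rk p n m k j)
      = ENNReal.ofReal (pp (n : ℝ) m * bp p m j) := by
    intro m
    calc ∑' k : ℕ, ENNReal.ofReal (pp (n : ℝ) m * Rk p n m k j)
        = ∑' k : ℕ, ENNReal.ofReal (pp (n : ℝ) m) * ENNReal.ofReal (Rk p n m k j) :=
          tsum_congr fun k => ENNReal.ofReal_mul (pp_nonneg (Nat.cast_nonneg n) m)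
      _ = ENNReal.ofReal (pp (n : ℝ) m) * ENNReal.ofReal (bp p m j) := by
          rw [ENNReal.tsum_mul_left, tsum_Rk_k hp0 hp1]
      _ = ENNReal.ofReal (pp (n : ℝ) m * bp p m j) :=
          (ENNReal.ofReal_mul (pp_nonneg (Nat.cast_nonneg n) m)).symm
  rw [tsum_congr hin,
    ← ENNReal.ofReal_tsum_of_nonneg
      (fun m => mul_nonneg (pp_nonneg (Nat.cast_nonneg n) m) (bp_nonneg hp0 hp1 _ _))
      (summable_pp_bp (Nat.cast_nonneg n) hp0 hp1 j),
    thin (Nat.cast_nonneg n) hp0 hp1 j]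

lemma cpl_cost (hp0 : 0 ≤ p) (hp1 : p ≤ 1) (n : ℕ) :
    ∫⁻ z, (Nat.dist z.1 z.2 : ℝ≥0∞) ∂(cplMeas p n)
      = ENNReal.ofReal (p * (2 * (n : ℝ) * pp (n : ℝ) n)) := by
  rw [cplMeas, lintegral_sum_measure]
  simp only [lintegral_smul_measure, lintegral_dirac]
  rw [ENNReal.tsum_prod']
  have step1 : ∀ k j : ℕ, Qk p n (k, j) * ((Nat.dist k j : ℕ) : ℝ≥0∞)
      = ∑' m : ℕ, ENNReal.ofReal (pp (n : ℝ) m)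
          * (ENNReal.ofReal (Rk p n m k j) * ((Nat.dist k j : ℕ) : ℝ≥0∞)) := by
    intro k j
    rw [Qk, ← ENNReal.tsum_mul_right]
    refine tsum_congr fun m => ?_
    rw [ENNReal.ofReal_mul (pp_nonneg (Nat.cast_nonneg n) m)]
    ring
  calc ∑' (k : ℕ) (j : ℕ), Qk p n (k, j) * ((Nat.dist k j : ℕ) : ℝ≥0∞)
      = ∑' (k : ℕ) (j : ℕ) (m : ℕ), ENNReal.ofReal (pp (n : ℝ) m)
          * (ENNReal.ofReal (Rk p n m k j) * ((Nat.dist k j : ℕ) : ℝ≥0∞)) :=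
        tsum_congr fun k => tsum_congr fun j => step1 k j
    _ = ∑' (m : ℕ) (k : ℕ) (j : ℕ), ENNReal.ofReal (pp (n : ℝ) m)
          * (ENNReal.ofReal (Rk p n m k j) * ((Nat.dist k j : ℕ) : ℝ≥0∞)) := by
        exact (tsum_congr fun k => ENNReal.tsum_comm).trans ENNReal.tsum_comm
    _ = ∑' m : ℕ, ENNReal.ofReal (pp (n : ℝ) m)
          * ENNReal.ofReal ((Nat.dist m n : ℝ) * p) := by
        refine tsum_congr fun m => ?_
        rw [← tsum_Rk_cost hp0 hp1 n m, ← ENNReal.tsum_mul_left]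
        exact tsum_congr fun k => ENNReal.tsum_mul_left
    _ = ∑' m : ℕ, ENNReal.ofReal (pp (n : ℝ) m * ((Nat.dist m n : ℝ) * p)) :=
        tsum_congr fun m =>
          (ENNReal.ofReal_mul (pp_nonneg (Nat.cast_nonneg n) m)).symm
    _ = ENNReal.ofReal (p * (2 * (n : ℝ) * pp (n : ℝ) n)) := by
        rw [← ENNReal.ofReal_tsum_of_nonneg
          (fun m => mul_nonneg (pp_nonneg (Nat.cast_nonneg n) m)
            (mul_nonneg (Nat.cast_nonneg _) hp0))
          (((summable_dist_pp n).mul_left p).congr fun m => by ring)]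
        congr 1
        have h : ∑' m : ℕ, pp (n : ℝ) m * ((Nat.dist m n : ℝ) * p)
            = p * ∑' m : ℕ, (Nat.dist m n : ℝ) * pp (n : ℝ) m := by
          rw [← tsum_mul_left]
          exact tsum_congr fun m => by ring
        rw [h, mad n]

lemma stirling_bound (n : ℕ) (hn : 1 ≤ n) :
    2 * (n : ℝ) * pp (n : ℝ) n ≤ Real.sqrt (2 * n / Real.pi) := by
  have hnp : (0:ℝ) < (n : ℝ) := by exact_mod_cast hn
  have hsp : Real.sqrt Real.pi ≤ Stirling.stirlingSeq n := by
    obtain ⟨m, rfl⟩ : ∃ m, n = m + 1 := ⟨n - 1, by omega⟩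
    have ht : Filter.Tendsto (Stirling.stirlingSeq ∘ Nat.succ) Filter.atTop
        (nhds (Real.sqrt Real.pi)) :=
      Stirling.tendsto_stirlingSeq_sqrt_pi.comp (Filter.tendsto_add_atTop_nat 1)
    exact Stirling.stirlingSeq'_antitone.le_of_tendsto ht m
  have hden : (0:ℝ) < Real.sqrt (2 * n) * ((n : ℝ) / Real.exp 1) ^ n := by
    have h2n : (0:ℝ) < 2 * n := by linarith
    positivity
  have hfac : Real.sqrt Real.pi * (Real.sqrt (2 * n) * ((n : ℝ) / Real.exp 1) ^ n)
      ≤ (n.factorial : ℝ) := by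
    have h := hsp
    rw [Stirling.stirlingSeq, le_div_iff₀ hden] at h
    linarith
  have hfacpos : (0:ℝ) < (n.factorial : ℝ) := by exact_mod_cast n.factorial_pos
  rw [pp, show 2 * (n:ℝ) * ((n:ℝ) ^ n * Real.exp (-(n:ℝ)) / (n.factorial : ℝ))
      = (2 * (n:ℝ) * ((n:ℝ) ^ n * Real.exp (-(n:ℝ)))) / (n.factorial : ℝ) from by ring,
    div_le_iff₀ hfacpos]
  have e0 : ((n : ℝ) / Real.exp 1) ^ n = (n : ℝ) ^ n * Real.exp (-(n : ℝ)) := by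
    rw [div_pow, Real.exp_one_pow, Real.exp_neg, div_eq_mul_inv]
  have e1 : Real.sqrt (2 * n / Real.pi) * Real.sqrt Real.pi = Real.sqrt (2 * n) := by
    rw [← Real.sqrt_mul (by positivity)]
    congr 1
    have hpi : Real.pi ≠ 0 := ne_of_gt Real.pi_pos
    field_simp
  have e2 : Real.sqrt (2 * n) * Real.sqrt (2 * n) = 2 * n :=
    Real.mul_self_sqrt (by positivity)
  have h4 : Real.sqrt (2 * n / Real.pi)
        * (Real.sqrt Real.pi * (Real.sqrt (2 * n) * ((n : ℝ) / Real.exp 1) ^ n))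
      ≤ Real.sqrt (2 * n / Real.pi) * (n.factorial : ℝ) :=
    mul_le_mul_of_nonneg_left hfac (Real.sqrt_nonneg _)
  calc 2 * (n : ℝ) * ((n : ℝ) ^ n * Real.exp (-(n : ℝ)))
      = Real.sqrt (2 * n / Real.pi)
          * (Real.sqrt Real.pi * (Real.sqrt (2 * n) * ((n : ℝ) / Real.exp 1) ^ n)) := by
        calc 2 * (n : ℝ) * ((n : ℝ) ^ n * Real.exp (-(n : ℝ)))
            = (Real.sqrt (2*n) * Real.sqrt (2*n)) * ((n : ℝ) / Real.exp 1) ^ n := by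
              rw [e2, e0]
          _ = (Real.sqrt (2 * n / Real.pi) * Real.sqrt Real.pi)
                * Real.sqrt (2*n) * ((n : ℝ) / Real.exp 1) ^ n := by rw [e1]
          _ = Real.sqrt (2 * n / Real.pi)
                * (Real.sqrt Real.pi * (Real.sqrt (2*n) * ((n : ℝ) / Real.exp 1) ^ n)) := by
              ring
    _ ≤ Real.sqrt (2 * n / Real.pi) * (n.factorial : ℝ) := h4

end BPW1

open BPW1

/-- `W₁(Binomial(μN, 1/N), Poisson(μ)) ≤ √(2μ/π)/√N ≤ √μ/√N`. -/
theorem binomial_poisson_W1 (N μ : ℕ) (hN : 2 ≤ N) (hμ : 1 ≤ μ) :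
    W1nat (binomialMeas (μ * N) (1 / (N : ℝ))) (poissonMeas μ)
        ≤ ENNReal.ofReal (Real.sqrt (2 * μ / Real.pi) / Real.sqrt N) ∧
      Real.sqrt (2 * μ / Real.pi) / Real.sqrt N ≤ Real.sqrt μ / Real.sqrt N := by
  have hN0 : (0:ℝ) < (N : ℝ) := by exact_mod_cast (by omega : 0 < N)
  set p : ℝ := 1 / (N : ℝ) with hp
  have hp0 : 0 ≤ p := by positivity
  have hp1 : p ≤ 1 := by
    rw [hp, div_le_one hN0]
    exact_mod_cast (by omega : 1 ≤ N)
  set n : ℕ := μ * N with hn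
  have hn1 : 1 ≤ n := by
    have h : 1 * 2 ≤ μ * N := Nat.mul_le_mul hμ hN
    omega
  constructor
  · -- the W1 bound
    have hfst : (cplMeas p n).map Prod.fst = binomialMeas n p := by
      rw [cpl_fst hp0 hp1 n]
      rfl
    have hnp : (n : ℝ) * p = (μ : ℝ) := by
      rw [hn, hp]
      push_cast
      field_simp
    have hsnd : (cplMeas p n).map Prod.snd = poissonMeas μ := by
      rw [cpl_snd hp0 hp1 n, hnp]
      rfl
    have hW : W1nat (binomialMeas n p) (poissonMeas μ)
        ≤ ∫⁻ z, (Nat.dist z.1 z.2 : ℝ≥0∞) ∂(cplMeas p n) := by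
      refine iInf_le_of_le (cplMeas p n) ?_
      rw [iInf_pos hfst, iInf_pos hsnd]
    refine hW.trans ?_
    rw [cpl_cost hp0 hp1 n]
    apply ENNReal.ofReal_le_ofReal
    have hst := stirling_bound n hn1
    have hmono : p * (2 * (n : ℝ) * pp (n : ℝ) n) ≤ p * Real.sqrt (2 * n / Real.pi) :=
      mul_le_mul_of_nonneg_left hst hp0
    refine hmono.trans (le_of_eq ?_)
    -- p * √(2n/π) = √(2μ/π)/√N
    have hNs : Real.sqrt (N : ℝ) * Real.sqrt (N : ℝ) = (N : ℝ) :=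
      Real.mul_self_sqrt (le_of_lt hN0)
    have hNs0 : (0:ℝ) < Real.sqrt (N : ℝ) := Real.sqrt_pos.2 hN0
    have hcast : (2 : ℝ) * (n : ℝ) / Real.pi = (2 * (μ : ℝ) / Real.pi) * (N : ℝ) := by
      rw [hn]
      push_cast
      ring
    have hsq : Real.sqrt (2 * (n : ℝ) / Real.pi)
        = Real.sqrt (2 * (μ : ℝ) / Real.pi) * Real.sqrt (N : ℝ) := by
      rw [hcast, Real.sqrt_mul (by positivity)]
    rw [hsq, hp]
    rw [eq_div_iff (ne_of_gt hNs0)]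
    have hre : 1 / (N:ℝ) * (Real.sqrt (2 * (μ:ℝ) / Real.pi) * Real.sqrt (N:ℝ)) * Real.sqrt (N:ℝ)
        = Real.sqrt (2 * (μ:ℝ) / Real.pi) * (Real.sqrt (N:ℝ) * Real.sqrt (N:ℝ)) / N := by ring
    rw [hre, hNs, mul_div_assoc, div_self (ne_of_gt hN0), mul_one]
  · -- √(2μ/π) ≤ √μ
    have h1 : 2 * (μ : ℝ) / Real.pi ≤ (μ : ℝ) := by
      rw [div_le_iff₀ Real.pi_pos]
      have hμ0 : (0:ℝ) ≤ (μ : ℝ) := Nat.cast_nonneg μ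
      nlinarith [Real.pi_gt_three]
    have h2 : Real.sqrt (2 * (μ : ℝ) / Real.pi) ≤ Real.sqrt (μ : ℝ) :=
      Real.sqrt_le_sqrt h1
    gcongr
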